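/- Let a, b be non-zero rational numbers and η, θ roots of unity with aη + bθ ∈ ℚ. Then, after possibly swapping the pairs (a,η) and (b,θ) and possibly replacing (a,η) by (−a,−η) and/or (b,θ) by (−b,−θ): either η, θ ∈ {1, −1}, or η is a primitive cube root of unity with θ = η⁻¹ and a = b, or θ = −η and a = b. -/

import Mathlib

/-- A complex number is a root of unity if some positive power of it equals 1. -/
def IsRootOfUnity (z : ℂ) : Prop := ∃ n : ℕ, 0 < n ∧ z ^ n = 1

/-- `(a', η')` is obtained from `(a, η)` by possibly replacing it with `(-a, -η)`. -/
def SignAdj (a : ℚ) (η : ℂ) (a' : ℚ) (η' : ℂ) : Prop :=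
  (a' = a ∧ η' = η) ∨ (a' = -a ∧ η' = -η)

/-- `(a', η', b', θ')` is obtained from `(a, η, b, θ)` by possibly swapping the two pairs
and possibly changing signs of each pair. -/
def Adjust (a b : ℚ) (η θ : ℂ) (a' b' : ℚ) (η' θ' : ℂ) : Prop :=
  (SignAdj a η a' η' ∧ SignAdj b θ b' θ') ∨ (SignAdj a η b' θ' ∧ SignAdj b θ a' η')

lemma no_rat_sq_three (r : ℚ) : r^2 ≠ 3 := by
  intro h
  have h3 : Irrational (Real.sqrt 3) := Nat.prime_three.irrational_sqrt
  have hr : ((r:ℝ))^2 = 3 := by exact_mod_cast h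
  have hs : Real.sqrt 3 = |(r:ℝ)| := by rw [← hr, Real.sqrt_sq_eq_abs]
  exact h3 ⟨|r|, by push_cast; rw [hs]⟩

lemma no_three_four (a b : ℚ) (hb : b ≠ 0) (h : 3*b^2 = 4*a^2) : False := by
  apply no_rat_sq_three (2*a/b)
  field_simp
  linarith

lemma prim3 (η : ℂ) (h : η^2 + η + 1 = 0) : IsPrimitiveRoot η 3 := by
  have h3 : η^3 = 1 := by linear_combination (η-1)*h
  refine ⟨h3, fun l hl => ?_⟩
  have hd := Nat.div_add_mod l 3
  have hpow : η ^ (l % 3) = 1 := by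
    calc η ^ (l % 3) = (η^3)^(l/3) * η^(l%3) := by rw [h3]; ring
    _ = η ^ (3*(l/3) + l%3) := by rw [pow_add, pow_mul]
    _ = 1 := by rw [hd, hl]
  have hr : l % 3 < 3 := Nat.mod_lt _ (by norm_num)
  interval_cases hlr : (l % 3)
  · exact Nat.dvd_of_mod_eq_zero hlr
  · rw [pow_one] at hpow; rw [hpow] at h; norm_num at h
  · have : η = -2 := by linear_combination h - hpow
    rw [this] at hpow; norm_num at hpow

lemma classify (η : ℂ) (n : ℕ) (hn : 0 < n) (hηn : η ^ n = 1) (r : ℚ)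
    (hr : η + η⁻¹ = (r:ℂ)) :
    η = 1 ∨ η = -1 ∨ η^2 = -1 ∨ η^2+η+1 = 0 ∨ η^2-η+1 = 0 := by
  have hη0 : η ≠ 0 := by
    intro h; rw [h] at hηn; simp [zero_pow hn.ne'] at hηn
  have habs : ‖η‖ = 1 := by
    have h1 : (‖η‖) ^ n = 1 := by
      rw [← norm_pow, hηn, norm_one]
    rcases (pow_eq_one_iff_cases).mp h1 with h | h | h
    · omega
    · exact h
    · exfalso; have := norm_nonneg η; rw [h.1] at this; linarith
  have hint : IsIntegral ℤ η := ⟨Polynomial.X ^ n - Polynomial.C 1,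
    Polynomial.monic_X_pow_sub_C 1 hn.ne', by simp [hηn]⟩
  have hinv_eq : η⁻¹ = η ^ (n-1) := by
    have h1 : η * η ^ (n-1) = 1 := by
      rw [← pow_succ', Nat.sub_add_cancel hn]; exact hηn
    exact inv_eq_of_mul_eq_one_right h1
  have hintinv : IsIntegral ℤ (η⁻¹) := by rw [hinv_eq]; exact hint.pow _
  have hintsum : IsIntegral ℤ ((r:ℚ):ℂ) := by
    rw [show ((r:ℚ):ℂ) = η + η⁻¹ from hr.symm]
    exact hint.add hintinv
  have hintr : IsIntegral ℤ r := by
    apply IsIntegral.tower_bot (A := ℚ) (B := ℂ) (R := ℤ)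
    · exact fun x y h => by exact_mod_cast h
    · exact hintsum
  obtain ⟨m, hm⟩ := IsIntegrallyClosed.isIntegral_iff.mp hintr
  have hm' : (m:ℚ) = r := hm
  have habs2 : ‖((r:ℚ):ℂ)‖ ≤ 2 := by
    rw [← hr]
    calc ‖η + η⁻¹‖ ≤ ‖η‖ + ‖η⁻¹‖ := norm_add_le _ _
    _ = 2 := by rw [norm_inv, habs]; norm_num
  have hmle : |(m:ℝ)| ≤ 2 := by
    rw [← Complex.norm_intCast]
    have h5 : ((m:ℤ):ℂ) = ((r:ℚ):ℂ) := by exact_mod_cast hm'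
    rw [h5]; exact habs2
  rw [abs_le] at hmle
  have hm2 : -2 ≤ m ∧ m ≤ 2 := ⟨by exact_mod_cast hmle.1, by exact_mod_cast hmle.2⟩
  have hkey : η^2 + 1 = (m:ℂ) * η := by
    have h6 : (η + η⁻¹) * η = (r:ℂ) * η := by rw [hr]
    have h2 : η^2 + η⁻¹*η = (r:ℂ)*η := by linear_combination h6
    rw [inv_mul_cancel₀ hη0] at h2
    rw [show ((m:ℂ)) = ((r:ℚ):ℂ) by exact_mod_cast hm']
    exact h2
  obtain ⟨hl, hr2⟩ := hm2
  interval_cases m <;> push_cast at hkey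
  · right; left
    have h7 : (η+1)^2 = 0 := by linear_combination hkey
    have := pow_eq_zero_iff (n := 2) (by norm_num) |>.mp h7
    linear_combination this
  · right; right; right; left; linear_combination hkey
  · right; right; left; linear_combination hkey
  · right; right; right; right; linear_combination hkey
  · left
    have h7 : (η-1)^2 = 0 := by linear_combination hkey
    have := pow_eq_zero_iff (n := 2) (by norm_num) |>.mp h7
    linear_combination this

lemma core (a b q : ℚ) (ha : a ≠ 0) (hb : b ≠ 0) (hq : q ≠ 0) (η θ : ℂ)
    (hη0 : η ≠ 0) (hθ0 : θ ≠ 0)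
    (h1 : (a:ℂ)*η + b*θ = q) (h2 : (a:ℂ)*η⁻¹ + b*θ⁻¹ = q)
    (cη : η = 1 ∨ η = -1 ∨ η^2 = -1 ∨ η^2+η+1 = 0)
    (cθ : θ = 1 ∨ θ = -1 ∨ θ^2 = -1 ∨ θ^2+θ+1 = 0) :
    ((η = 1 ∨ η = -1) ∧ (θ = 1 ∨ θ = -1)) ∨
    (IsPrimitiveRoot η 3 ∧ θ = η⁻¹ ∧ (a:ℚ) = b) := by
  have ha' : (a:ℂ) ≠ 0 := by exact_mod_cast ha
  have hb' : (b:ℂ) ≠ 0 := by exact_mod_cast hb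
  have hq' : (q:ℂ) ≠ 0 := by exact_mod_cast hq
  have hηi : η * η⁻¹ = 1 := mul_inv_cancel₀ hη0
  have hθi : θ * θ⁻¹ = 1 := mul_inv_cancel₀ hθ0
  have E : (a:ℂ)*(η - η⁻¹) + b*(θ - θ⁻¹) = 0 := by linear_combination h1 - h2
  have θsq1 : θ^2 = 1 → (θ = 1 ∨ θ = -1) := by
    intro hsq
    rcases cθ with h|h|h|h
    · exact Or.inl h
    · exact Or.inr h
    · exfalso; rw [hsq] at h; norm_num at h
    · exfalso
      have h8 : θ = -2 := by linear_combination h - hsq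
      rw [h8] at hsq; norm_num at hsq
  rcases cη with hη|hη|hη|hη
  · subst hη
    have hE : (b:ℂ)*(θ - θ⁻¹) = 0 := by rw [inv_one] at E; linear_combination E
    have hθθ : θ = θ⁻¹ := by
      rcases mul_eq_zero.mp hE with h|h
      · exact absurd h hb'
      · linear_combination h
    have hsq : θ^2 = 1 := by linear_combination θ*hθθ + hθi
    exact Or.inl ⟨Or.inl rfl, θsq1 hsq⟩
  · subst hη
    have hE : (b:ℂ)*(θ - θ⁻¹) = 0 := by
      rw [show ((-1:ℂ))⁻¹ = -1 by norm_num] at E; linear_combination E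
    have hθθ : θ = θ⁻¹ := by
      rcases mul_eq_zero.mp hE with h|h
      · exact absurd h hb'
      · linear_combination h
    have hsq : θ^2 = 1 := by linear_combination θ*hθθ + hθi
    exact Or.inl ⟨Or.inr rfl, θsq1 hsq⟩
  · exfalso
    have hηinv : η⁻¹ = -η := by
      apply inv_eq_of_mul_eq_one_right; linear_combination -hη
    rw [hηinv] at E
    rcases cθ with h|h|h|h
    · subst h; rw [inv_one] at E
      have : (a:ℂ)*(2*η) = 0 := by linear_combination E
      rcases mul_eq_zero.mp this with h|h
      · exact ha' h
      · exact hη0 (by linear_combination h/2)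
    · subst h
      rw [show ((-1:ℂ))⁻¹ = -1 by norm_num] at E
      have : (a:ℂ)*(2*η) = 0 := by linear_combination E
      rcases mul_eq_zero.mp this with h|h
      · exact ha' h
      · exact hη0 (by linear_combination h/2)
    · have hθinv : θ⁻¹ = -θ := by
        apply inv_eq_of_mul_eq_one_right; linear_combination -h
      rw [hθinv] at E
      have hfac : (θ - η)*(θ + η) = 0 := by linear_combination h - hη
      rcases mul_eq_zero.mp hfac with h9|h9
      · have hθη : θ = η := by linear_combination h9
        subst hθη
        have hab : (a:ℂ) + b = 0 := by
          have h10 : ((a:ℂ)+b)*(2*θ) = 0 := by linear_combination E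
          rcases mul_eq_zero.mp h10 with h|h
          · exact h
          · exact absurd (by linear_combination h/2) hθ0
        have : (q:ℂ) = 0 := by linear_combination -h1 + θ*hab
        exact hq' this
      · have hθη : θ = -η := by linear_combination h9
        subst hθη
        have hab : (a:ℂ) - b = 0 := by
          have h10 : ((a:ℂ)-b)*(2*η) = 0 := by linear_combination E
          rcases mul_eq_zero.mp h10 with h|h
          · exact h
          · exact absurd (by linear_combination h/2) hη0
        have : (q:ℂ) = 0 := by linear_combination -h1 + η*hab
        exact hq' this
    · have hθinv : θ⁻¹ = θ^2 := by
        apply inv_eq_of_mul_eq_one_right; linear_combination θ*h - h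
      rw [hθinv] at E
      have hE2 : 2*(a:ℂ)*η + b*(2*θ+1) = 0 := by linear_combination E + b*h
      have : (3:ℂ)*b^2 = 4*a^2 := by
        linear_combination (2*(a:ℂ)*η - b*(2*θ+1))*hE2 - 4*(a:ℂ)^2*hη + 4*(b:ℂ)^2*h
      exact no_three_four a b hb (by exact_mod_cast this)
  · have hηinv : η⁻¹ = η^2 := by
      apply inv_eq_of_mul_eq_one_right; linear_combination η*hη - hη
    rw [hηinv] at E
    have h2η : 2*η + 1 ≠ 0 := by
      intro h
      have hη12 : η = -(1/2) := by linear_combination h/2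
      rw [hη12] at hη; norm_num at hη
    rcases cθ with h|h|h|h
    · exfalso; subst h; rw [inv_one] at E
      have : (a:ℂ)*(2*η+1) = 0 := by linear_combination E + a*hη
      rcases mul_eq_zero.mp this with h|h
      · exact ha' h
      · exact h2η h
    · exfalso; subst h
      rw [show ((-1:ℂ))⁻¹ = -1 by norm_num] at E
      have : (a:ℂ)*(2*η+1) = 0 := by linear_combination E + a*hη
      rcases mul_eq_zero.mp this with h|h
      · exact ha' h
      · exact h2η h
    · exfalso
      have hθinv : θ⁻¹ = -θ := by
        apply inv_eq_of_mul_eq_one_right; linear_combination -h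
      rw [hθinv] at E
      have hE2 : (a:ℂ)*(2*η+1) + 2*b*θ = 0 := by linear_combination E + a*hη
      have : (3:ℂ)*a^2 = 4*b^2 := by
        linear_combination -((a:ℂ)*(2*η+1) - 2*(b:ℂ)*θ)*hE2 + 4*(a:ℂ)^2*hη - 4*(b:ℂ)^2*h
      exact no_three_four b a ha (by exact_mod_cast this)
    · have hθinv : θ⁻¹ = θ^2 := by
        apply inv_eq_of_mul_eq_one_right; linear_combination θ*h - h
      rw [hθinv] at E
      have hfac : (θ - η)*(θ - η^2) = 0 := by
        linear_combination h + (η - 1 - θ)*hη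
      rcases mul_eq_zero.mp hfac with h9|h9
      · exfalso
        have hθη : θ = η := by linear_combination h9
        subst hθη
        have hab : (a:ℂ) + b = 0 := by
          have h10 : ((a:ℂ)+b)*(2*θ+1) = 0 := by linear_combination E + (a+b)*hη
          rcases mul_eq_zero.mp h10 with h|h
          · exact h
          · exact absurd h h2η
        have : (q:ℂ) = 0 := by linear_combination -h1 + θ*hab
        exact hq' this
      · have hθη : θ = η^2 := by linear_combination h9
        have hab : (a:ℂ) = b := by
          have hne : η - η^2 ≠ 0 := by
            intro h
            have : 2*η + 1 = 0 := by linear_combination h + hη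
            exact h2η this
          have h10 : ((a:ℂ) - b)*(η - η^2) = 0 := by
            subst hθη
            linear_combination E + (b:ℂ)*η*(η-1)*hη
          rcases mul_eq_zero.mp h10 with h|h
          · linear_combination h
          · exact absurd h hne
        refine Or.inr ⟨prim3 η hη, ?_, by exact_mod_cast hab⟩
        rw [hηinv]; exact hθη

lemma conj_eq_inv (η : ℂ) (n : ℕ) (hn : 0 < n) (hηn : η ^ n = 1) :
    (starRingEnd ℂ) η = η⁻¹ := by
  have habs : ‖η‖ = 1 := by
    have h1 : (‖η‖) ^ n = 1 := by rw [← norm_pow, hηn, norm_one]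
    rcases (pow_eq_one_iff_cases).mp h1 with h | h | h
    · omega
    · exact h
    · exfalso; have := norm_nonneg η; rw [h.1] at this; linarith
  have hmul : η * (starRingEnd ℂ) η = 1 := by
    rw [Complex.mul_conj, ← Complex.sq_norm, habs]; norm_num
  exact (inv_eq_of_mul_eq_one_right hmul).symm

/-- If `a, b` are non-zero rationals and `η, θ` roots of unity with `aη + bθ ∈ ℚ`, then after
possibly swapping and sign-changing the pairs: either both roots of unity are `±1`, or `η` is a
primitive cube root of unity with `θ = η⁻¹` and `a = b`, or `θ = -η` and `a = b`. -/
theorem rational_combination_of_two_roots_of_unity (a b : ℚ) (ha : a ≠ 0) (hb : b ≠ 0)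
    (η θ : ℂ) (hη : IsRootOfUnity η) (hθ : IsRootOfUnity θ)
    (hrat : ∃ q : ℚ, (a : ℂ) * η + (b : ℂ) * θ = (q : ℂ)) :
    ∃ (a' b' : ℚ) (η' θ' : ℂ), Adjust a b η θ a' b' η' θ' ∧
      (((η' = 1 ∨ η' = -1) ∧ (θ' = 1 ∨ θ' = -1)) ∨
        (IsPrimitiveRoot η' 3 ∧ θ' = η'⁻¹ ∧ a' = b') ∨
        (θ' = -η' ∧ a' = b')) := by
  obtain ⟨q, hq⟩ := hrat
  obtain ⟨n, hn, hηn⟩ := hη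
  obtain ⟨m, hm, hθm⟩ := hθ
  have ha' : (a:ℂ) ≠ 0 := by exact_mod_cast ha
  have hb' : (b:ℂ) ≠ 0 := by exact_mod_cast hb
  have hη0 : η ≠ 0 := by
    intro h; rw [h] at hηn; simp [zero_pow hn.ne'] at hηn
  have hθ0 : θ ≠ 0 := by
    intro h; rw [h] at hθm; simp [zero_pow hm.ne'] at hθm
  have hηi : η * η⁻¹ = 1 := mul_inv_cancel₀ hη0
  have hθi : θ * θ⁻¹ = 1 := mul_inv_cancel₀ hθ0
  have h2 : (a:ℂ)*η⁻¹ + b*θ⁻¹ = q := by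
    have := congrArg (starRingEnd ℂ) hq
    simpa [map_add, map_mul, conj_eq_inv η n hn hηn, conj_eq_inv θ m hm hθm] using this
  by_cases hq0 : q = 0
  · subst hq0
    push_cast at hq h2
    have ha2b2 : (a:ℂ)^2 = b^2 := by
      linear_combination ((a:ℂ)*η⁻¹)*hq - ((b:ℂ)*θ)*h2 - (a:ℂ)^2*hηi + (b:ℂ)^2*hθi
    have hab2 : a^2 = b^2 := by exact_mod_cast ha2b2
    have hfac : (a - b)*(a + b) = 0 := by linear_combination hab2
    rcases mul_eq_zero.mp hfac with h|h
    · have hab : a = b := by linarith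
      have hθη : θ = -η := by
        have h5 : (b:ℂ)*(η + θ) = 0 := by
          rw [show ((b:ℂ)) = a by exact_mod_cast hab.symm] at *
          linear_combination hq
        rcases mul_eq_zero.mp h5 with h|h
        · exact absurd h hb'
        · linear_combination h
      exact ⟨a, b, η, θ, Or.inl ⟨Or.inl ⟨rfl, rfl⟩, Or.inl ⟨rfl, rfl⟩⟩,
        Or.inr (Or.inr ⟨hθη, hab⟩)⟩
    · have hab : a = -b := by linarith
      have hθη : θ = η := by
        have h5 : (b:ℂ)*(θ - η) = 0 := by
          have hc : (a:ℂ) = -b := by exact_mod_cast hab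
          linear_combination hq - η*hc
        rcases mul_eq_zero.mp h5 with h|h
        · exact absurd h hb'
        · linear_combination h
      refine ⟨a, -b, η, -θ, Or.inl ⟨Or.inl ⟨rfl, rfl⟩, Or.inr ⟨rfl, rfl⟩⟩,
        Or.inr (Or.inr ⟨by rw [hθη], by linarith⟩)⟩
  · have hq' : (q:ℂ) ≠ 0 := by exact_mod_cast hq0
    have haq : (a:ℂ)*q ≠ 0 := mul_ne_zero ha' hq'
    have hbq : (b:ℂ)*q ≠ 0 := mul_ne_zero hb' hq'
    have hsumη : (a:ℂ)*q*(η + η⁻¹) = q^2 + a^2 - b^2 := by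
      linear_combination ((q:ℂ) - a*η⁻¹)*hq + ((b:ℂ)*θ)*h2 + (a:ℂ)^2*hηi - (b:ℂ)^2*hθi
    have hsumθ : (b:ℂ)*q*(θ + θ⁻¹) = q^2 + b^2 - a^2 := by
      linear_combination ((q:ℂ) - b*θ⁻¹)*hq + ((a:ℂ)*η)*h2 + (b:ℂ)^2*hθi - (a:ℂ)^2*hηi
    have hrη : η + η⁻¹ = (((q^2+a^2-b^2)/(a*q)):ℚ) := by
      push_cast
      rw [eq_div_iff (by push_cast at haq ⊢; exact haq)]
      linear_combination hsumη
    have hrθ : θ + θ⁻¹ = (((q^2+b^2-a^2)/(b*q)):ℚ) := by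
      push_cast
      rw [eq_div_iff (by push_cast at hbq ⊢; exact hbq)]
      linear_combination hsumθ
    have cη5 := classify η n hn hηn _ hrη
    have cθ5 := classify θ m hm hθm _ hrθ
    obtain ⟨a₁, η₁, hsadjη, hpη, hpηi, ha₁, hη₁0, cη₁⟩ :
        ∃ (a₁ : ℚ) (η₁ : ℂ), SignAdj a η a₁ η₁ ∧ (a₁:ℂ)*η₁ = a*η ∧
          (a₁:ℂ)*η₁⁻¹ = (a:ℂ)*η⁻¹ ∧ a₁ ≠ 0 ∧ η₁ ≠ 0 ∧
          (η₁ = 1 ∨ η₁ = -1 ∨ η₁^2 = -1 ∨ η₁^2+η₁+1 = 0) := by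
      rcases cη5 with h|h|h|h|h
      · exact ⟨a, η, Or.inl ⟨rfl, rfl⟩, rfl, rfl, ha, hη0, Or.inl h⟩
      · exact ⟨a, η, Or.inl ⟨rfl, rfl⟩, rfl, rfl, ha, hη0, Or.inr (Or.inl h)⟩
      · exact ⟨a, η, Or.inl ⟨rfl, rfl⟩, rfl, rfl, ha, hη0, Or.inr (Or.inr (Or.inl h))⟩
      · exact ⟨a, η, Or.inl ⟨rfl, rfl⟩, rfl, rfl, ha, hη0, Or.inr (Or.inr (Or.inr h))⟩
      · refine ⟨-a, -η, Or.inr ⟨rfl, rfl⟩, by push_cast; ring, ?_, neg_ne_zero.mpr ha,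
          neg_ne_zero.mpr hη0, Or.inr (Or.inr (Or.inr (by linear_combination h)))⟩
        rw [inv_neg]; push_cast; ring
    obtain ⟨b₁, θ₁, hsadjθ, hpθ, hpθi, hb₁, hθ₁0, cθ₁⟩ :
        ∃ (b₁ : ℚ) (θ₁ : ℂ), SignAdj b θ b₁ θ₁ ∧ (b₁:ℂ)*θ₁ = b*θ ∧
          (b₁:ℂ)*θ₁⁻¹ = (b:ℂ)*θ⁻¹ ∧ b₁ ≠ 0 ∧ θ₁ ≠ 0 ∧
          (θ₁ = 1 ∨ θ₁ = -1 ∨ θ₁^2 = -1 ∨ θ₁^2+θ₁+1 = 0) := by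
      rcases cθ5 with h|h|h|h|h
      · exact ⟨b, θ, Or.inl ⟨rfl, rfl⟩, rfl, rfl, hb, hθ0, Or.inl h⟩
      · exact ⟨b, θ, Or.inl ⟨rfl, rfl⟩, rfl, rfl, hb, hθ0, Or.inr (Or.inl h)⟩
      · exact ⟨b, θ, Or.inl ⟨rfl, rfl⟩, rfl, rfl, hb, hθ0, Or.inr (Or.inr (Or.inl h))⟩
      · exact ⟨b, θ, Or.inl ⟨rfl, rfl⟩, rfl, rfl, hb, hθ0, Or.inr (Or.inr (Or.inr h))⟩
      · refine ⟨-b, -θ, Or.inr ⟨rfl, rfl⟩, by push_cast; ring, ?_, neg_ne_zero.mpr hb,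
          neg_ne_zero.mpr hθ0, Or.inr (Or.inr (Or.inr (by linear_combination h)))⟩
        rw [inv_neg]; push_cast; ring
    have h1' : (a₁:ℂ)*η₁ + b₁*θ₁ = q := by rw [hpη, hpθ]; exact hq
    have h2' : (a₁:ℂ)*η₁⁻¹ + b₁*θ₁⁻¹ = q := by rw [hpηi, hpθi]; exact h2
    rcases core a₁ b₁ q ha₁ hb₁ hq0 η₁ θ₁ hη₁0 hθ₁0 h1' h2' cη₁ cθ₁ with hres|hres
    · exact ⟨a₁, b₁, η₁, θ₁, Or.inl ⟨hsadjη, hsadjθ⟩, Or.inl hres⟩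
    · exact ⟨a₁, b₁, η₁, θ₁, Or.inl ⟨hsadjη, hsadjθ⟩, Or.inr (Or.inl hres)⟩
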